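/- For positive definite matrices Σ₀ and Σ_f, among all n×n real matrices S such that the block matrix [[Σ₀, S],[Sᵀ, Σ_f]] is positive semidefinite, the quantity trace(Σ₀ + Σ_f − 2S) is minimized uniquely at S = Σ₀^{1/2}(Σ₀^{1/2} Σ_f Σ₀^{1/2})^{1/2} Σ₀^{-1/2}, with minimum value trace(Σ₀ + Σ_f − 2(Σ₀^{1/2} Σ_f Σ₀^{1/2})^{1/2}). -/

import Mathlib

set_option autoImplicit false
open Matrix
noncomputable section

namespace Matrix.PosSemidef

/-- The positive semidefinite square root (the definition of the older Mathlib). -/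
noncomputable def sqrt {m : Type*} [Fintype m] [DecidableEq m]
    {A : Matrix m m ℝ} (hA : A.PosSemidef) : Matrix m m ℝ :=
  hA.1.eigenvectorUnitary.1 * diagonal ((√·) ∘ hA.1.eigenvalues) *
    (star hA.1.eigenvectorUnitary : Matrix m m ℝ)

theorem posSemidef_sqrt {m : Type*} [Fintype m] [DecidableEq m]
    {A : Matrix m m ℝ} (hA : A.PosSemidef) : hA.sqrt.PosSemidef := by
  have hd : (diagonal ((√·) ∘ hA.1.eigenvalues : m → ℝ)).PosSemidef :=
    PosSemidef.diagonal (fun i => Real.sqrt_nonneg _)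
  have := hd.mul_mul_conjTranspose_same (hA.1.eigenvectorUnitary : Matrix m m ℝ)
  unfold sqrt
  simpa [Matrix.star_eq_conjTranspose] using this

theorem sqrt_mul_self {m : Type*} [Fintype m] [DecidableEq m]
    {A : Matrix m m ℝ} (hA : A.PosSemidef) : hA.sqrt * hA.sqrt = A := by
  have hU : (star hA.1.eigenvectorUnitary : Matrix m m ℝ) * hA.1.eigenvectorUnitary.1 = 1 :=
    Unitary.coe_star_mul_self _
  have hD : diagonal ((√·) ∘ hA.1.eigenvalues) * diagonal ((√·) ∘ hA.1.eigenvalues)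
      = diagonal (RCLike.ofReal ∘ hA.1.eigenvalues : m → ℝ) := by
    rw [diagonal_mul_diagonal]
    congr 1
    funext i
    simp [Real.mul_self_sqrt (hA.eigenvalues_nonneg i)]
  unfold sqrt
  conv_rhs => rw [hA.1.spectral_theorem, Unitary.conjStarAlgAut_apply]
  rw [← hD]
  calc _ = hA.1.eigenvectorUnitary.1 * diagonal ((√·) ∘ hA.1.eigenvalues) *
        ((star hA.1.eigenvectorUnitary : Matrix m m ℝ) * hA.1.eigenvectorUnitary.1) *
        diagonal ((√·) ∘ hA.1.eigenvalues) * (star hA.1.eigenvectorUnitary : Matrix m m ℝ) := by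
          simp only [Matrix.mul_assoc]
    _ = _ := by rw [hU, Matrix.mul_one]; simp only [Matrix.mul_assoc]

end Matrix.PosSemidef

/-- The middle matrix `Σ₀^{1/2} Σf Σ₀^{1/2}` is positive semidefinite. -/
theorem midPosSemidef {n : ℕ} {S0 Sf : Matrix (Fin n) (Fin n) ℝ}
    (h0 : S0.PosDef) (hf : Sf.PosDef) :
    (h0.posSemidef.sqrt * Sf * h0.posSemidef.sqrt).PosSemidef := by
  have h := hf.posSemidef.mul_mul_conjTranspose_same h0.posSemidef.sqrt
  rwa [h0.posSemidef.posSemidef_sqrt.isHermitian] at h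

/-- The optimal coupling matrix `S = Σ₀^{1/2}(Σ₀^{1/2}ΣfΣ₀^{1/2})^{1/2}Σ₀^{-1/2}`. -/
noncomputable def Sopt {n : ℕ} {S0 Sf : Matrix (Fin n) (Fin n) ℝ}
    (h0 : S0.PosDef) (hf : Sf.PosDef) : Matrix (Fin n) (Fin n) ℝ :=
  h0.posSemidef.sqrt * (midPosSemidef h0 hf).sqrt * (h0.posSemidef.sqrt)⁻¹

lemma aux_posDef_of_isUnit {n : ℕ} {A : Matrix (Fin n) (Fin n) ℝ}
    (h : A.PosSemidef) (hu : IsUnit A) : A.PosDef := by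
  refine posDef_iff_dotProduct_mulVec.mpr ⟨h.1, fun x hx => ?_⟩
  rcases (h.dotProduct_mulVec_nonneg x).lt_or_eq with hlt | heq
  · exact hlt
  · exfalso
    have hz : A *ᵥ x = 0 := (h.dotProduct_mulVec_zero_iff x).mp heq.symm
    have hinj := Matrix.mulVec_injective_iff_isUnit.mpr hu
    exact hx (hinj (by simpa using hz))

lemma aux_trace_nonneg {n : ℕ} {A : Matrix (Fin n) (Fin n) ℝ} (h : A.PosSemidef) :
    0 ≤ A.trace := by
  rw [Matrix.trace]
  refine Finset.sum_nonneg fun i _ => ?_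
  simpa using h.dotProduct_mulVec_nonneg (Pi.single i 1)

lemma aux_eq_zero_of_trace {n : ℕ} {C : Matrix (Fin n) (Fin n) ℝ}
    (h : (C * Cᵀ).trace = 0) : C = 0 := by
  have hexp : (C * Cᵀ).trace = ∑ i, ∑ j, (C i j)^2 := by
    simp [Matrix.trace, Matrix.mul_apply, Matrix.diag, sq]
  rw [hexp] at h
  ext i j
  have h1 : ∀ i ∈ Finset.univ, (0:ℝ) ≤ ∑ j, (C i j)^2 :=
    fun i _ => Finset.sum_nonneg fun j _ => sq_nonneg _
  have h2 := (Finset.sum_eq_zero_iff_of_nonneg h1).mp h i (Finset.mem_univ i)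
  have h3 := (Finset.sum_eq_zero_iff_of_nonneg
    (fun j _ => sq_nonneg (C i j))).mp h2 j (Finset.mem_univ j)
  simpa using sq_eq_zero_iff.mp h3

lemma aux_unit_of_sq {n : ℕ} {A : Matrix (Fin n) (Fin n) ℝ}
    (h : IsUnit (A * A)) : IsUnit A := by
  rw [Matrix.isUnit_iff_isUnit_det] at h ⊢
  rw [Matrix.det_mul] at h
  exact isUnit_of_mul_isUnit_left h

/-- among all `S` with `[[Σ₀, S],[Sᵀ, Σf]] ⪰ 0`,
`trace(Σ₀ + Σf − 2S)` is uniquely minimized at `Sopt`, with minimum value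
`trace(Σ₀ + Σf − 2(Σ₀^{1/2}ΣfΣ₀^{1/2})^{1/2})`. -/
theorem stmt1 {n : ℕ} (S0 Sf : Matrix (Fin n) (Fin n) ℝ)
    (h0 : S0.PosDef) (hf : Sf.PosDef) :
    (Matrix.fromBlocks S0 (Sopt h0 hf) (Sopt h0 hf)ᵀ Sf).PosSemidef ∧
    (∀ S : Matrix (Fin n) (Fin n) ℝ,
      (Matrix.fromBlocks S0 S Sᵀ Sf).PosSemidef →
        (S0 + Sf - 2 • Sopt h0 hf).trace ≤ (S0 + Sf - 2 • S).trace ∧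
        ((S0 + Sf - 2 • S).trace = (S0 + Sf - 2 • Sopt h0 hf).trace → S = Sopt h0 hf)) ∧
    (S0 + Sf - 2 • Sopt h0 hf).trace
      = (S0 + Sf - 2 • (midPosSemidef h0 hf).sqrt).trace := by
  classical
  have hct : ∀ (X : Matrix (Fin n) (Fin n) ℝ), Xᴴ = Xᵀ := fun X =>
    Matrix.conjTranspose_eq_transpose_of_trivial X
  set A := h0.posSemidef.sqrt with hAdef
  have hApsd : A.PosSemidef := h0.posSemidef.posSemidef_sqrt
  have hAA : A * A = S0 := h0.posSemidef.sqrt_mul_self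
  have hAunit : IsUnit A := aux_unit_of_sq (hAA ▸ h0.isUnit)
  have hAt : Aᵀ = A := by rw [← hct]; exact hApsd.1
  have hAdu : IsUnit A.det := (Matrix.isUnit_iff_isUnit_det _).1 hAunit
  have hA1 : A⁻¹ * A = 1 := Matrix.nonsing_inv_mul _ hAdu
  have hA2 : A * A⁻¹ = 1 := Matrix.mul_nonsing_inv _ hAdu
  have cA1 : ∀ X : Matrix (Fin n) (Fin n) ℝ, A * (A⁻¹ * X) = X := fun X => by
    rw [← Matrix.mul_assoc, hA2, Matrix.one_mul]
  have cA2 : ∀ X : Matrix (Fin n) (Fin n) ℝ, A⁻¹ * (A * X) = X := fun X => by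
    rw [← Matrix.mul_assoc, hA1, Matrix.one_mul]
  set M := A * Sf * A with hMdef
  set B := (midPosSemidef h0 hf).sqrt with hBdef
  have hBpsd : B.PosSemidef := (midPosSemidef h0 hf).posSemidef_sqrt
  have hBB : B * B = M := (midPosSemidef h0 hf).sqrt_mul_self
  have hMunit : IsUnit M := by
    rw [Matrix.isUnit_iff_isUnit_det, hMdef, Matrix.det_mul, Matrix.det_mul]
    exact (hAdu.mul ((Matrix.isUnit_iff_isUnit_det _).1 hf.isUnit)).mul hAdu
  have hBunit : IsUnit B := aux_unit_of_sq (hBB ▸ hMunit)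
  have hBpd : B.PosDef := aux_posDef_of_isUnit hBpsd hBunit
  have hBt : Bᵀ = B := by rw [← hct]; exact hBpsd.1
  have hBdu : IsUnit B.det := (Matrix.isUnit_iff_isUnit_det _).1 hBunit
  have hB1 : B⁻¹ * B = 1 := Matrix.nonsing_inv_mul _ hBdu
  have hB2 : B * B⁻¹ = 1 := Matrix.mul_nonsing_inv _ hBdu
  have hBinvpd : B⁻¹.PosDef := hBpd.inv
  have hS0inv : S0⁻¹ = A⁻¹ * A⁻¹ := by rw [← hAA, Matrix.mul_inv_rev]
  have hSoptdef : Sopt h0 hf = A * B * A⁻¹ := rfl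
  have hSoptT : (Sopt h0 hf)ᵀ = A⁻¹ * B * A := by
    rw [hSoptdef]
    simp [Matrix.transpose_mul, Matrix.transpose_nonsing_inv, hAt, hBt, Matrix.mul_assoc]
  haveI : Invertible S0 := h0.isUnit.invertible
  have schur_iff : ∀ S : Matrix (Fin n) (Fin n) ℝ,
      (fromBlocks S0 S Sᵀ Sf).PosSemidef ↔ (Sf - Sᵀ * S0⁻¹ * S).PosSemidef := by
    intro S
    rw [← hct S]
    exact Matrix.PosDef.fromBlocks₁₁ S Sf h0
  -- trace of Sopt equals trace of B
  have trSopt : (Sopt h0 hf).trace = B.trace := by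
    rw [hSoptdef, Matrix.trace_mul_cycle, hA1, Matrix.one_mul]
  -- feasibility of Sopt
  have hfeas : (fromBlocks S0 (Sopt h0 hf) (Sopt h0 hf)ᵀ Sf).PosSemidef := by
    rw [schur_iff]
    have hkey : (Sopt h0 hf)ᵀ * S0⁻¹ * Sopt h0 hf = Sf := by
      rw [hSoptT, hSoptdef, hS0inv]
      have hBBa : ∀ X : Matrix (Fin n) (Fin n) ℝ, B * (B * X) = A * (Sf * (A * X)) := by
        intro X
        rw [← Matrix.mul_assoc, hBB, hMdef, Matrix.mul_assoc, Matrix.mul_assoc]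
      simp only [Matrix.mul_assoc, cA1, cA2, hBBa, hA2, Matrix.mul_one]
    rw [hkey, sub_self]
    exact Matrix.PosSemidef.zero
  -- main bound for any feasible S
  have main : ∀ S : Matrix (Fin n) (Fin n) ℝ, (fromBlocks S0 S Sᵀ Sf).PosSemidef →
      S.trace ≤ B.trace ∧ (S.trace = B.trace → S = Sopt h0 hf) := by
    intro S hS
    have hSchur : (Sf - Sᵀ * S0⁻¹ * S).PosSemidef := (schur_iff S).mp hS
    set T := A⁻¹ * S * A with hTdef
    have hTt : Tᵀ = A * Sᵀ * A⁻¹ := by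
      rw [hTdef]
      simp [Matrix.transpose_mul, Matrix.transpose_nonsing_inv, hAt, Matrix.mul_assoc]
    have hMT : M - Tᵀ * T = A * (Sf - Sᵀ * S0⁻¹ * S) * A := by
      rw [hTt, hTdef, hS0inv, hMdef]
      simp only [Matrix.mul_sub, Matrix.sub_mul, Matrix.mul_assoc, cA1, cA2]
    have key1 : (M - Tᵀ * T).PosSemidef := by
      rw [hMT]
      have h := hSchur.mul_mul_conjTranspose_same A
      rwa [hApsd.1] at h
    set D := T - B with hDdef
    have key2 : (D * B⁻¹ * Dᵀ).PosSemidef := by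
      have h := hBinvpd.posSemidef.mul_mul_conjTranspose_same D
      rwa [hct D] at h
    -- trace identities
    have trS : S.trace = T.trace := by
      rw [hTdef, Matrix.trace_mul_cycle, hA2, Matrix.one_mul]
    have cB1 : ∀ X : Matrix (Fin n) (Fin n) ℝ, B * (B⁻¹ * X) = X := fun X => by
      rw [← Matrix.mul_assoc, hB2, Matrix.one_mul]
    have expandX : D * B⁻¹ * Dᵀ = T * B⁻¹ * Tᵀ - T - Tᵀ + B := by
      rw [hDdef, Matrix.transpose_sub, hBt]
      simp only [Matrix.sub_mul, Matrix.mul_sub, Matrix.mul_assoc, hB1, Matrix.mul_one, cB1]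
      abel
    have trTBT : (T * B⁻¹ * Tᵀ).trace = (B⁻¹ * (Tᵀ * T)).trace := by
      rw [Matrix.trace_mul_cycle, Matrix.trace_mul_comm]
    have trX : (D * B⁻¹ * Dᵀ).trace
        = (B⁻¹ * (Tᵀ * T)).trace - T.trace - T.trace + B.trace := by
      rw [expandX, Matrix.trace_add, Matrix.trace_sub, Matrix.trace_sub,
        Matrix.trace_transpose, trTBT]
    have trBinvM : (B⁻¹ * M).trace = B.trace := by
      rw [← hBB, ← Matrix.mul_assoc, hB1, Matrix.one_mul]
    have hd : 0 ≤ (B⁻¹ * (M - Tᵀ * T)).trace := by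
      set R := hBinvpd.posSemidef.sqrt with hRdef
      have hRpsd : R.PosSemidef := hBinvpd.posSemidef.posSemidef_sqrt
      have hRR : R * R = B⁻¹ := hBinvpd.posSemidef.sqrt_mul_self
      have hRt : Rᵀ = R := by rw [← hct]; exact hRpsd.1
      have : (B⁻¹ * (M - Tᵀ * T)).trace = (R * (M - Tᵀ * T) * R).trace := by
        rw [← hRR, Matrix.mul_assoc, Matrix.trace_mul_comm R, Matrix.mul_assoc]
      rw [this]
      have h := key1.mul_mul_conjTranspose_same R
      rw [hct R, hRt] at h
      exact aux_trace_nonneg h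
    have hdsplit : (B⁻¹ * (M - Tᵀ * T)).trace
        = B.trace - (B⁻¹ * (Tᵀ * T)).trace := by
      rw [Matrix.mul_sub, Matrix.trace_sub, trBinvM]
    have hX0 : 0 ≤ (D * B⁻¹ * Dᵀ).trace := aux_trace_nonneg key2
    constructor
    · rw [trS]; rw [hdsplit] at hd; linarith [trX, hX0, hd]
    · intro heq
      have hTB : T.trace = B.trace := by rw [← trS]; exact heq
      have hXz : (D * B⁻¹ * Dᵀ).trace = 0 := by
        rw [hdsplit] at hd
        nlinarith [trX, hX0, hd, hTB]
      -- from trace zero conclude D = 0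
      set R := hBinvpd.posSemidef.sqrt with hRdef
      have hRpsd : R.PosSemidef := hBinvpd.posSemidef.posSemidef_sqrt
      have hRR : R * R = B⁻¹ := hBinvpd.posSemidef.sqrt_mul_self
      have hRt : Rᵀ = R := by rw [← hct]; exact hRpsd.1
      have hRunit : IsUnit R := aux_unit_of_sq (hRR ▸ hBinvpd.isUnit)
      have hRdu : IsUnit R.det := (Matrix.isUnit_iff_isUnit_det _).1 hRunit
      have hfact : D * B⁻¹ * Dᵀ = (D * R) * (D * R)ᵀ := by
        rw [Matrix.transpose_mul, hRt, ← hRR]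
        simp only [Matrix.mul_assoc]
      have hDR : D * R = 0 := aux_eq_zero_of_trace (by rw [← hfact]; exact hXz)
      have hD0 : D = 0 := by
        have := congrArg (· * R⁻¹) hDR
        simpa [Matrix.mul_assoc, Matrix.mul_nonsing_inv _ hRdu] using this
      have hTB' : T = B := by rwa [hDdef, sub_eq_zero] at hD0
      have : A * T * A⁻¹ = S := by
        rw [hTdef]
        simp only [Matrix.mul_assoc, cA1, cA2, hA2, Matrix.mul_one]
      rw [← this, hTB', hSoptdef]
  refine ⟨hfeas, fun S hS => ?_, ?_⟩
  · obtain ⟨hle, hequ⟩ := main S hS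
    have expand : ∀ X : Matrix (Fin n) (Fin n) ℝ,
        (S0 + Sf - 2 • X).trace = S0.trace + Sf.trace - 2 * X.trace := by
      intro X
      rw [Matrix.trace_sub, Matrix.trace_add, Matrix.trace_smul]
      simp [nsmul_eq_mul]
    constructor
    · rw [expand, expand, trSopt]; linarith
    · intro heq
      rw [expand, expand, trSopt] at heq
      exact hequ (by linarith)
  · have expand : ∀ X : Matrix (Fin n) (Fin n) ℝ,
        (S0 + Sf - 2 • X).trace = S0.trace + Sf.trace - 2 * X.trace := by
      intro X
      rw [Matrix.trace_sub, Matrix.trace_add, Matrix.trace_smul]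
      simp [nsmul_eq_mul]
    rw [expand, expand, trSopt]
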